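/- arXiv:math/0205206 — 4 statements merged into one kernel-verified Lean document; each statement's English description precedes it below -/
import Mathlib

section
/- For all n ≥ 3, every permutation π of {1,...,n} avoiding the patterns 132, 2341, and 3241 satisfies π⁻¹(n) = 1, π⁻¹(n) = 2, or π⁻¹(n) = n; i.e., the maximum value n occurs in the first, second, or last position. -/
/-- A function `π : Fin n → Fin n` contains the pattern `p : Fin k → ℕ` if there is a
strictly increasing choice of indices whose images under `π` have the same pairwise
order relations as the entries of `p`. -/
def Contains {n k : ℕ} (π : Fin n → Fin n) (p : Fin k → ℕ) : Prop :=
  ∃ f : Fin k → Fin n, StrictMono f ∧ ∀ i j, p i < p j ↔ π (f i) < π (f j)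

/-- `π` avoids the pattern `p`. -/
def Avoids {n k : ℕ} (π : Fin n → Fin n) (p : Fin k → ℕ) : Prop := ¬ Contains π p

/-- The set of permutations of `Fin n` avoiding the patterns 132, 2341 and 3241,
i.e. the 132-avoiding two-stack sortable permutations. -/
def TSS132 (n : ℕ) : Set (Fin n → Fin n) :=
  {π | Function.Bijective π ∧ Avoids π ![1,3,2] ∧ Avoids π ![2,3,4,1] ∧ Avoids π ![3,2,4,1]}

/-- The Pell numbers. -/
def pell : ℕ → ℕ
  | 0 => 0
  | 1 => 1
  | n+2 => 2 * pell (n+1) + pell n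


lemma c132 {n : ℕ} (π : Fin n → Fin n) (a b c : Fin n) (hab : a < b) (hbc : b < c)
    (h1 : π a < π c) (h2 : π c < π b) : Contains π ![1,3,2] := by
  have h3 : π a < π b := h1.trans h2
  refine ⟨![a,b,c], ?_, ?_⟩
  · intro i j hij
    fin_cases i <;> fin_cases j <;>
      simp only [Matrix.cons_val_zero, Matrix.cons_val_one, Matrix.head_cons, Fin.mk_one,
        Fin.zero_eta, Matrix.cons_val_two, Matrix.tail_cons, Fin.isValue] <;>
      first
        | exact absurd hij (by decide)
        | assumption
        | exact hab.trans hbc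
  · intro i j
    fin_cases i <;> fin_cases j <;>
      simp only [Matrix.cons_val_zero, Matrix.cons_val_one, Matrix.head_cons, Fin.mk_one,
        Fin.zero_eta, Matrix.cons_val_two, Matrix.tail_cons, Fin.isValue] <;>
      norm_num <;>
      first | assumption | exact h1.le | exact h2.le | exact h3.le

lemma c2341 {n : ℕ} (π : Fin n → Fin n) (a b c d : Fin n) (hab : a < b) (hbc : b < c)
    (hcd : c < d) (h1 : π d < π a) (h2 : π a < π b) (h3 : π b < π c) :
    Contains π ![2,3,4,1] := by
  have h4 : π a < π c := h2.trans h3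
  have h5 : π d < π b := h1.trans h2
  have h6 : π d < π c := h5.trans h3
  refine ⟨![a,b,c,d], ?_, ?_⟩
  · intro i j hij
    fin_cases i <;> fin_cases j <;>
      simp only [Matrix.cons_val_zero, Matrix.cons_val_one, Matrix.head_cons, Fin.mk_one,
        Fin.zero_eta, Matrix.cons_val_two, Matrix.tail_cons, Fin.isValue,
        Matrix.cons_val_three] <;>
      first
        | exact absurd hij (by decide)
        | assumption
        | exact hab.trans hbc
        | exact hbc.trans hcd
        | exact (hab.trans hbc).trans hcd
  · intro i j
    fin_cases i <;> fin_cases j <;>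
      simp only [Matrix.cons_val_zero, Matrix.cons_val_one, Matrix.head_cons, Fin.mk_one,
        Fin.zero_eta, Matrix.cons_val_two, Matrix.tail_cons, Fin.isValue,
        Matrix.cons_val_three] <;>
      norm_num <;>
      first
        | assumption
        | exact h1.le
        | exact h2.le
        | exact h3.le
        | exact h4.le
        | exact h5.le
        | exact h6.le

lemma c3241 {n : ℕ} (π : Fin n → Fin n) (a b c d : Fin n) (hab : a < b) (hbc : b < c)
    (hcd : c < d) (h1 : π d < π b) (h2 : π b < π a) (h3 : π a < π c) :
    Contains π ![3,2,4,1] := by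
  have h4 : π b < π c := h2.trans h3
  have h5 : π d < π a := h1.trans h2
  have h6 : π d < π c := h5.trans h3
  refine ⟨![a,b,c,d], ?_, ?_⟩
  · intro i j hij
    fin_cases i <;> fin_cases j <;>
      simp only [Matrix.cons_val_zero, Matrix.cons_val_one, Matrix.head_cons, Fin.mk_one,
        Fin.zero_eta, Matrix.cons_val_two, Matrix.tail_cons, Fin.isValue,
        Matrix.cons_val_three] <;>
      first
        | exact absurd hij (by decide)
        | assumption
        | exact hab.trans hbc
        | exact hbc.trans hcd
        | exact (hab.trans hbc).trans hcd
  · intro i j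
    fin_cases i <;> fin_cases j <;>
      simp only [Matrix.cons_val_zero, Matrix.cons_val_one, Matrix.head_cons, Fin.mk_one,
        Fin.zero_eta, Matrix.cons_val_two, Matrix.tail_cons, Fin.isValue,
        Matrix.cons_val_three] <;>
      norm_num <;>
      first
        | assumption
        | exact h1.le
        | exact h2.le
        | exact h3.le
        | exact h4.le
        | exact h5.le
        | exact h6.le

theorem stmt_0 (n : ℕ) (hn : 3 ≤ n) (π : Fin n → Fin n) (hπ : π ∈ TSS132 n)
    (i : Fin n) (hi : π i = ⟨n-1, by omega⟩) :
    i = ⟨0, by omega⟩ ∨ i = ⟨1, by omega⟩ ∨ i = ⟨n-1, by omega⟩ := by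
  obtain ⟨hbij, h132, h2341, h3241⟩ := hπ
  by_contra hcon
  push_neg at hcon
  obtain ⟨h0, h1, hl⟩ := hcon
  have h0' : i.val ≠ 0 := fun h => h0 (Fin.ext h)
  have h1' : i.val ≠ 1 := fun h => h1 (Fin.ext h)
  have hl' : i.val ≠ n - 1 := fun h => hl (Fin.ext h)
  have hiLt := i.isLt
  have hi2 : 2 ≤ i.val := by omega
  have hin : i.val < n - 1 := by omega
  have p0 : 0 < n := by omega
  have p1 : 1 < n := by omega
  have pl : n - 1 < n := by omega
  have hai : (⟨0, p0⟩ : Fin n) < i := by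
    simp [Fin.lt_def]; omega
  have hbi : (⟨1, p1⟩ : Fin n) < i := by
    simp [Fin.lt_def]; omega
  have hic : i < (⟨n-1, pl⟩ : Fin n) := by
    simp [Fin.lt_def]; omega
  have hab : (⟨0, p0⟩ : Fin n) < (⟨1, p1⟩ : Fin n) := by
    simp [Fin.lt_def]
  have hmax : ∀ x : Fin n, x.val ≠ i.val → π x < π i := by
    intro x hx
    have hne : π x ≠ π i := fun h => hx (congrArg Fin.val (hbij.1 h))
    rw [hi] at hne ⊢
    have hle : (π x).val ≤ n - 1 := by have := (π x).isLt; omega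
    have hne' : (π x).val ≠ n - 1 := fun h => hne (Fin.ext h)
    rw [Fin.lt_def]; exact by simp; omega
  have hac : π ⟨0, p0⟩ < π i := hmax _ (by simp; omega)
  have hbc : π ⟨1, p1⟩ < π i := hmax _ (by simp; omega)
  have hcc : π ⟨n-1, pl⟩ < π i := hmax _ (by simp; omega)
  have hinj : ∀ x y : Fin n, x ≠ y → π x ≠ π y := fun x y hxy h => hxy (hbij.1 h)
  by_cases hca : π ⟨0, p0⟩ < π ⟨n-1, pl⟩
  · exact h132 (c132 π ⟨0, p0⟩ i ⟨n-1, pl⟩ hai hic hca hcc)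
  · by_cases hcb : π ⟨1, p1⟩ < π ⟨n-1, pl⟩
    · exact h132 (c132 π ⟨1, p1⟩ i ⟨n-1, pl⟩ hbi hic hcb hcc)
    · have hca' : π ⟨n-1, pl⟩ < π ⟨0, p0⟩ :=
        lt_of_le_of_ne (not_lt.1 hca) (hinj _ _ (by rw [Ne, Fin.ext_iff]; simp; omega))
      have hcb' : π ⟨n-1, pl⟩ < π ⟨1, p1⟩ :=
        lt_of_le_of_ne (not_lt.1 hcb) (hinj _ _ (by rw [Ne, Fin.ext_iff]; simp; omega))
      by_cases hab' : π ⟨0, p0⟩ < π ⟨1, p1⟩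
      · exact h2341 (c2341 π ⟨0, p0⟩ ⟨1, p1⟩ i ⟨n-1, pl⟩ hab hbi hic hca' hab' hbc)
      · have hba : π ⟨1, p1⟩ < π ⟨0, p0⟩ :=
          lt_of_le_of_ne (not_lt.1 hab') (hinj _ _ (by rw [Ne, Fin.ext_iff]; simp))
        exact h3241 (c3241 π ⟨0, p0⟩ ⟨1, p1⟩ i ⟨n-1, pl⟩ hab hbi hic hcb' hba hac)
end

section
/- For all n ≥ 3, the map π ↦ (n-1, n, π) is a bijection from P_{n-2}(132) onto the set of permutations in P_n(132) whose second entry is n. -/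
namespace Stmt3Aux

variable {m : ℕ}

def F (π : Fin m → Fin m) : Fin (m+2) → Fin (m+2) :=
  Fin.cons ((Fin.last m).castSucc)
    (Fin.cons (Fin.last (m+1)) (fun i => ((π i).castSucc).castSucc))

lemma F_zero (π : Fin m → Fin m) : F π 0 = (Fin.last m).castSucc := rfl

lemma one_eq_succ : (1 : Fin (m+2)) = (0 : Fin (m+1)).succ := by
  ext; simp

lemma F_one (π : Fin m → Fin m) : F π 1 = Fin.last (m+1) := by
  rw [one_eq_succ, F, Fin.cons_succ, Fin.cons_zero]

lemma F_succ_succ (π : Fin m → Fin m) (k : Fin m) :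
    F π k.succ.succ = ((π k).castSucc).castSucc := by
  rw [F, Fin.cons_succ, Fin.cons_succ]

lemma F_val_zero (π : Fin m → Fin m) : (F π 0).val = m := rfl

lemma F_val_one (π : Fin m → Fin m) : (F π 1).val = m + 1 := by
  rw [F_one]; rfl

lemma cases3 (j : Fin (m+2)) : j = 0 ∨ j = 1 ∨ ∃ k : Fin m, j = k.succ.succ := by
  induction j using Fin.cases with
  | zero => exact Or.inl rfl
  | succ i =>
    induction i using Fin.cases with
    | zero => exact Or.inr (Or.inl (by ext; simp))
    | succ k => exact Or.inr (Or.inr ⟨k, rfl⟩)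

lemma F_classify (π : Fin m → Fin m) (j : Fin (m+2)) :
    (j.val = 0 ∧ (F π j).val = m) ∨ (j.val = 1 ∧ (F π j).val = m+1) ∨
      (2 ≤ j.val ∧ (F π j).val < m) := by
  rcases cases3 j with rfl|rfl|⟨k, rfl⟩
  · exact Or.inl ⟨rfl, F_val_zero π⟩
  · exact Or.inr (Or.inl ⟨rfl, F_val_one π⟩)
  · refine Or.inr (Or.inr ⟨by simp [Fin.val_succ], ?_⟩)
    rw [F_succ_succ]
    simpa using (π k).isLt

lemma shift {k : ℕ} (π : Fin m → Fin m) (p : Fin (k+1) → ℕ) (f : Fin (k+1) → Fin (m+2))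
    (hmono : StrictMono f) (hrel : ∀ i j, p i < p j ↔ F π (f i) < F π (f j))
    (h0 : 2 ≤ (f 0).val) : Contains π p := by
  have hge : ∀ i, 2 ≤ (f i).val := by
    intro i
    have h := hmono.monotone (Fin.zero_le i)
    rw [Fin.le_def] at h
    omega
  have hlt : ∀ i, (f i).val - 2 < m := fun i => by have := (f i).isLt; omega
  have key : ∀ i, (F π (f i)).val = (π ⟨(f i).val - 2, hlt i⟩).val := by
    intro i
    have e : f i = ((⟨(f i).val - 2, hlt i⟩ : Fin m)).succ.succ := by
      ext
      simp only [Fin.val_succ]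
      have := hge i
      omega
    conv_lhs => rw [e, F_succ_succ]
    rfl
  refine ⟨fun i => ⟨(f i).val - 2, hlt i⟩, ?_, ?_⟩
  · intro i j hij
    have h := hmono hij
    rw [Fin.lt_def] at h
    show ((⟨(f i).val - 2, hlt i⟩ : Fin m)) < ⟨(f j).val - 2, hlt j⟩
    rw [Fin.mk_lt_mk]
    have := hge i
    omega
  · intro i j
    rw [hrel i j]
    simp only [Fin.lt_def]
    rw [key i, key j]

lemma avoid_132 (π : Fin m → Fin m) (hπ : Avoids π ![1,3,2]) : Avoids (F π) ![1,3,2] := by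
  rintro ⟨f, hmono, hrel⟩
  have hA := (hrel 0 2).1 (by decide)
  have hB := (hrel 2 1).1 (by decide)
  have m01 := hmono (show (0 : Fin 3) < 1 by decide)
  have m12 := hmono (show (1 : Fin 3) < 2 by decide)
  rw [Fin.lt_def] at hA hB m01 m12
  have h0 : 2 ≤ (f 0).val := by
    rcases F_classify π (f 0) with ⟨e0,v0⟩|⟨e0,v0⟩|⟨e0,v0⟩ <;>
    rcases F_classify π (f 1) with ⟨e1,v1⟩|⟨e1,v1⟩|⟨e1,v1⟩ <;>
    rcases F_classify π (f 2) with ⟨e2,v2⟩|⟨e2,v2⟩|⟨e2,v2⟩ <;> omega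
  exact hπ (shift π _ f hmono hrel h0)

lemma avoid_2341 (π : Fin m → Fin m) (hπ : Avoids π ![2,3,4,1]) : Avoids (F π) ![2,3,4,1] := by
  rintro ⟨f, hmono, hrel⟩
  have hA := (hrel 3 0).1 (by decide)
  have hB := (hrel 0 1).1 (by decide)
  have hC := (hrel 1 2).1 (by decide)
  have m01 := hmono (show (0 : Fin 4) < 1 by decide)
  have m12 := hmono (show (1 : Fin 4) < 2 by decide)
  have m23 := hmono (show (2 : Fin 4) < 3 by decide)
  rw [Fin.lt_def] at hA hB hC m01 m12 m23
  have h0 : 2 ≤ (f 0).val := by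
    rcases F_classify π (f 0) with ⟨e0,v0⟩|⟨e0,v0⟩|⟨e0,v0⟩ <;>
    rcases F_classify π (f 1) with ⟨e1,v1⟩|⟨e1,v1⟩|⟨e1,v1⟩ <;>
    rcases F_classify π (f 2) with ⟨e2,v2⟩|⟨e2,v2⟩|⟨e2,v2⟩ <;> omega
  exact hπ (shift π _ f hmono hrel h0)

lemma avoid_3241 (π : Fin m → Fin m) (hπ : Avoids π ![3,2,4,1]) : Avoids (F π) ![3,2,4,1] := by
  rintro ⟨f, hmono, hrel⟩
  have hA := (hrel 3 1).1 (by decide)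
  have hB := (hrel 1 0).1 (by decide)
  have hC := (hrel 0 2).1 (by decide)
  have m01 := hmono (show (0 : Fin 4) < 1 by decide)
  have m12 := hmono (show (1 : Fin 4) < 2 by decide)
  have m23 := hmono (show (2 : Fin 4) < 3 by decide)
  rw [Fin.lt_def] at hA hB hC m01 m12 m23
  have h0 : 2 ≤ (f 0).val := by
    rcases F_classify π (f 0) with ⟨e0,v0⟩|⟨e0,v0⟩|⟨e0,v0⟩ <;>
    rcases F_classify π (f 1) with ⟨e1,v1⟩|⟨e1,v1⟩|⟨e1,v1⟩ <;>
    rcases F_classify π (f 2) with ⟨e2,v2⟩|⟨e2,v2⟩|⟨e2,v2⟩ <;> omega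
  exact hπ (shift π _ f hmono hrel h0)

lemma F_bijective (π : Fin m → Fin m) (hπ : Function.Bijective π) :
    Function.Bijective (F π) := by
  constructor
  · intro a b hab
    have hv := congrArg Fin.val hab
    rcases cases3 a with rfl|rfl|⟨ka, rfl⟩ <;> rcases cases3 b with rfl|rfl|⟨kb, rfl⟩
    · rfl
    · rw [F_val_zero, F_val_one] at hv; omega
    · rw [F_val_zero, F_succ_succ] at hv
      simp only [Fin.coe_castSucc] at hv
      exact absurd hv (by have := (π kb).isLt; omega)
    · rw [F_val_one, F_val_zero] at hv; omega
    · rfl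
    · rw [F_val_one, F_succ_succ] at hv
      simp only [Fin.coe_castSucc] at hv
      exact absurd hv (by have := (π kb).isLt; omega)
    · rw [F_succ_succ, F_val_zero] at hv
      simp only [Fin.coe_castSucc] at hv
      exact absurd hv (by have := (π ka).isLt; omega)
    · rw [F_succ_succ, F_val_one] at hv
      simp only [Fin.coe_castSucc] at hv
      exact absurd hv (by have := (π ka).isLt; omega)
    · rw [F_succ_succ, F_succ_succ] at hv
      simp only [Fin.coe_castSucc] at hv
      rw [hπ.1 (Fin.ext hv)]
  · intro y
    rcases Nat.lt_trichotomy y.val m with h|h|h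
    · obtain ⟨k, hk⟩ := hπ.2 ⟨y.val, h⟩
      refine ⟨k.succ.succ, ?_⟩
      ext
      rw [F_succ_succ]
      simp [hk]
    · exact ⟨0, by ext; rw [F_val_zero]; omega⟩
    · have hy : y.val = m + 1 := by have := y.isLt; omega
      exact ⟨1, by ext; rw [F_val_one]; omega⟩

lemma avoids_restrict {k : ℕ} (σ : Fin (m+2) → Fin (m+2)) (π : Fin m → Fin m)
    (hval : ∀ i, (π i).val = (σ i.succ.succ).val) (p : Fin k → ℕ)
    (hσ : Avoids σ p) : Avoids π p := by
  rintro ⟨f, hmono, hrel⟩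
  refine hσ ⟨fun i => (f i).succ.succ, ?_, ?_⟩
  · intro i j hij
    have h := hmono hij
    rw [Fin.lt_def] at h ⊢
    simp only [Fin.val_succ]
    omega
  · intro i j
    rw [hrel i j, Fin.lt_def, Fin.lt_def, hval, hval]

end Stmt3Aux

theorem stmt_3 (m : ℕ) (hm : 1 ≤ m) :
    Set.BijOn
      (fun π : Fin m → Fin m =>
        Fin.cons ((Fin.last m).castSucc)
          (Fin.cons (Fin.last (m+1)) (fun i => ((π i).castSucc).castSucc)))
      (TSS132 m)
      {σ ∈ TSS132 (m+2) | σ 1 = Fin.last (m+1)} := by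
  open Stmt3Aux in
  show Set.BijOn F (TSS132 m) _
  refine ⟨?_, ?_, ?_⟩
  · rintro π ⟨hbij, h1, h2, h3⟩
    exact ⟨⟨Stmt3Aux.F_bijective π hbij, Stmt3Aux.avoid_132 π h1,
      Stmt3Aux.avoid_2341 π h2, Stmt3Aux.avoid_3241 π h3⟩, Stmt3Aux.F_one π⟩
  · intro a _ b _ hab
    funext i
    have h := congrFun hab i.succ.succ
    rw [Stmt3Aux.F_succ_succ, Stmt3Aux.F_succ_succ] at h
    have hv := congrArg Fin.val h
    simp only [Fin.coe_castSucc] at hv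
    exact Fin.ext hv
  · rintro σ ⟨⟨hbij, h1, h2, h3⟩, hσ1⟩
    have hσ1v : (σ 1).val = m + 1 := by rw [hσ1]; rfl
    have hσ0 : (σ 0).val = m := by
      by_contra hne
      have h0lt : (σ 0).val < m := by
        have hb := (σ 0).isLt
        have hne1 : (σ 0).val ≠ m + 1 := by
          intro e
          have he : σ 0 = σ 1 := Fin.ext (by rw [e, hσ1v])
          have := congrArg Fin.val (hbij.1 he)
          simp at this
        omega
      obtain ⟨k, hk⟩ := hbij.2 ⟨m, by omega⟩
      have hkv : (σ k).val = m := by rw [hk]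
      have hk2 : 2 ≤ k.val := by
        rcases Stmt3Aux.cases3 k with rfl|rfl|⟨k', rfl⟩
        · omega
        · omega
        · simp only [Fin.val_succ]; omega
      apply h1
      have e3 : ∀ i : Fin 3, i = 0 ∨ i = 1 ∨ i = 2 := by decide
      have w0 : ![(0 : Fin (m+2)), 1, k] 0 = 0 := rfl
      have w1 : ![(0 : Fin (m+2)), 1, k] 1 = 1 := rfl
      have w2 : ![(0 : Fin (m+2)), 1, k] 2 = k := rfl
      have q0 : ![1,3,2] (0 : Fin 3) = 1 := rfl
      have q1 : ![1,3,2] (1 : Fin 3) = 3 := rfl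
      have q2 : ![1,3,2] (2 : Fin 3) = 2 := rfl
      have v0 : ((0 : Fin (m+2))).val = 0 := rfl
      have v1 : ((1 : Fin (m+2))).val = 1 := Fin.val_one _
      refine ⟨![0, 1, k], ?_, ?_⟩
      · intro i j hij
        rcases e3 i with rfl|rfl|rfl <;> rcases e3 j with rfl|rfl|rfl <;>
          first
          | (exfalso; revert hij; decide)
          | (simp only [w0, w1, w2, Fin.lt_def, v0, v1]; omega)
      · intro i j
        rcases e3 i with rfl|rfl|rfl <;> rcases e3 j with rfl|rfl|rfl <;>
          simp only [w0, w1, w2, q0, q1, q2, Fin.lt_def, v0, v1] <;> omega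
    have hvlt : ∀ i : Fin m, (σ i.succ.succ).val < m := by
      intro i
      have hb := (σ i.succ.succ).isLt
      have hne0 : (σ i.succ.succ).val ≠ m := by
        intro e
        have he : σ i.succ.succ = σ 0 := Fin.ext (by rw [e, hσ0])
        have := congrArg Fin.val (hbij.1 he)
        simp [Fin.val_succ] at this
      have hne1 : (σ i.succ.succ).val ≠ m + 1 := by
        intro e
        have he : σ i.succ.succ = σ 1 := Fin.ext (by rw [e, hσ1v])
        have := congrArg Fin.val (hbij.1 he)
        simp [Fin.val_succ] at this
      omega
    refine ⟨fun i => ⟨(σ i.succ.succ).val, hvlt i⟩, ?_, ?_⟩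
    · set π : Fin m → Fin m := fun i => ⟨(σ i.succ.succ).val, hvlt i⟩ with hπdef
      have hval : ∀ i, (π i).val = (σ i.succ.succ).val := fun i => rfl
      have hπinj : Function.Injective π := by
        intro a b hab
        have he : σ a.succ.succ = σ b.succ.succ :=
          Fin.ext (by rw [← hval, ← hval, hab])
        have h2 := congrArg Fin.val (hbij.1 he)
        simp only [Fin.val_succ] at h2
        exact Fin.ext (by omega)
      exact ⟨Finite.injective_iff_bijective.mp hπinj,
        Stmt3Aux.avoids_restrict σ π hval _ h1,
        Stmt3Aux.avoids_restrict σ π hval _ h2,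
        Stmt3Aux.avoids_restrict σ π hval _ h3⟩
    · funext j
      rcases Stmt3Aux.cases3 j with rfl|rfl|⟨k, rfl⟩
      · exact Fin.ext (by rw [Stmt3Aux.F_val_zero, hσ0])
      · rw [Stmt3Aux.F_one, hσ1]
      · refine Fin.ext ?_
        rw [Stmt3Aux.F_succ_succ]
        rfl
end

section
/- For all n ≥ 1, the number of permutations of {1,...,n} avoiding the patterns 132, 2341, and 3241 equals the n-th Pell number p_n, where p_0 = 0, p_1 = 1, and p_n = 2p_{n-1} + p_{n-2}. -/
instance {n k : ℕ} (π : Fin n → Fin n) (p : Fin k → ℕ) : Decidable (Contains π p) :=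
  decidable_of_iff (∃ f : Fin k → Fin n, (∀ i j : Fin k, i < j → f i < f j) ∧
    ∀ i j, p i < p j ↔ π (f i) < π (f j)) (by
      constructor
      · rintro ⟨f, h1, h2⟩; exact ⟨f, fun i j h => h1 i j h, h2⟩
      · rintro ⟨f, h1, h2⟩; exact ⟨f, fun i j h => h1 h, h2⟩)

instance {n k : ℕ} (π : Fin n → Fin n) (p : Fin k → ℕ) : Decidable (Avoids π p) :=
  instDecidableNot

instance {n : ℕ} : DecidablePred (· ∈ TSS132 n) := fun π => by
  unfold TSS132; simp only [Set.mem_setOf_eq]; infer_instance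

/-- append new max at the end -/
def Emap {n : ℕ} (π : Fin n → Fin n) : Fin (n+1) → Fin (n+1) :=
  Fin.lastCases (Fin.last n) (fun i => (π i).castSucc)

/-- prepend new max at the front -/
def Pmap {n : ℕ} (π : Fin n → Fin n) : Fin (n+1) → Fin (n+1) :=
  Fin.cases (Fin.last n) (fun i => (π i).castSucc)

/-- prepend (second-max, max) at the front -/
def Qmap {n : ℕ} (π : Fin n → Fin n) : Fin (n+2) → Fin (n+2) :=
  Fin.cases ((Fin.last n).castSucc)
    (Fin.cases (Fin.last (n+1)) (fun i => ((π i).castSucc).castSucc))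

@[simp] lemma Emap_castSucc {n} (π : Fin n → Fin n) (i : Fin n) :
    Emap π i.castSucc = (π i).castSucc := by simp [Emap]

@[simp] lemma Emap_last {n} (π : Fin n → Fin n) :
    Emap π (Fin.last n) = Fin.last n := by simp [Emap]

@[simp] lemma Pmap_zero {n} (π : Fin n → Fin n) : Pmap π 0 = Fin.last n := by simp [Pmap]

@[simp] lemma Pmap_succ {n} (π : Fin n → Fin n) (i : Fin n) :
    Pmap π i.succ = (π i).castSucc := by simp [Pmap]

@[simp] lemma Qmap_zero {n} (π : Fin n → Fin n) : Qmap π 0 = (Fin.last n).castSucc := by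
  simp [Qmap]

@[simp] lemma Qmap_one {n} (π : Fin n → Fin n) : Qmap π 1 = Fin.last (n+1) := by
  have h : (1 : Fin (n+2)) = (0 : Fin (n+1)).succ := by
    apply Fin.ext; simp
  rw [h, Qmap, Fin.cases_succ, Fin.cases_zero]

@[simp] lemma Qmap_succ_succ {n} (π : Fin n → Fin n) (i : Fin n) :
    Qmap π i.succ.succ = ((π i).castSucc).castSucc := by
  simp [Qmap]

lemma contains_comp {m n k} {τ : Fin m → Fin m} {σ : Fin n → Fin n} {p : Fin k → ℕ}
    (g : Fin m → Fin n) (hg : StrictMono g)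
    (hord : ∀ i j, τ i < τ j ↔ σ (g i) < σ (g j)) :
    Contains τ p → Contains σ p := by
  rintro ⟨f, hf, hiff⟩
  exact ⟨g ∘ f, hg.comp hf, fun i j => (hiff i j).trans (hord _ _)⟩

lemma avoids_Emap {n k} {π : Fin n → Fin n} {p : Fin (k+1) → ℕ}
    (j : Fin (k+1)) (hj : p (Fin.last k) < p j) (h : Avoids π p) : Avoids (Emap π) p := by
  rintro ⟨f, hf, hiff⟩
  by_cases hl : ∃ l, f l = Fin.last n
  · obtain ⟨l, hfl⟩ := hl
    have h1 : f (Fin.last k) = Fin.last n :=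
      le_antisymm (Fin.le_last _) (hfl ▸ hf.monotone (Fin.le_last l))
    have h2 := (hiff (Fin.last k) j).mp hj
    rw [h1, Emap_last] at h2
    exact absurd h2 (show _ ≤ Fin.last _ from Fin.le_last _).not_gt
  · push_neg at hl
    apply h
    have hv : ∀ i, (f i : ℕ) < n := by
      intro i
      have h1 : (f i : ℕ) ≠ n := fun h' => hl i (Fin.ext h')
      have := (f i).isLt
      omega
    refine ⟨fun i => ⟨f i, hv i⟩, fun a b hab => by
      simp only [Fin.lt_def]; exact hf hab, ?_⟩
    intro a b
    rw [hiff a b]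
    have ea : f a = Fin.castSucc ⟨f a, hv a⟩ := Fin.ext rfl
    have eb : f b = Fin.castSucc ⟨f b, hv b⟩ := Fin.ext rfl
    rw [ea, eb, Emap_castSucc, Emap_castSucc, Fin.castSucc_lt_castSucc_iff]

lemma avoids_Pmap {n k} {π : Fin n → Fin n} {p : Fin (k+1) → ℕ}
    (j : Fin (k+1)) (hj : p 0 < p j) (h : Avoids π p) : Avoids (Pmap π) p := by
  rintro ⟨f, hf, hiff⟩
  by_cases hl : ∃ l, f l = 0
  · obtain ⟨l, hfl⟩ := hl
    have h1 : f 0 = 0 := le_antisymm (hfl ▸ hf.monotone (Fin.zero_le l)) (Fin.zero_le _)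
    have h2 := (hiff 0 j).mp hj
    rw [h1, Pmap_zero] at h2
    exact absurd h2 (show _ ≤ Fin.last _ from Fin.le_last _).not_gt
  · push_neg at hl
    apply h
    have hv : ∀ i, 1 ≤ (f i : ℕ) := by
      intro i
      have h1 : (f i : ℕ) ≠ 0 := by
        intro h'
        exact hl i (by apply Fin.ext; simp [h'])
      omega
    have hv2 : ∀ i, (f i : ℕ) - 1 < n := by intro i; have := (f i).isLt; have := hv i; omega
    have ee : ∀ i, f i = Fin.succ ⟨(f i : ℕ) - 1, hv2 i⟩ := by
      intro i; apply Fin.ext; simp [Fin.val_succ]; have := hv i; omega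
    refine ⟨fun i => ⟨(f i : ℕ) - 1, hv2 i⟩, fun a b hab => by
      have h2 := hf hab
      simp only [Fin.lt_def] at h2 ⊢
      have := hv a; omega, ?_⟩
    intro a b
    rw [hiff a b, ee a, ee b, Pmap_succ, Pmap_succ, Fin.castSucc_lt_castSucc_iff]
lemma avoids_Qmap {n k} {π : Fin n → Fin n} {p : Fin (k+2) → ℕ}
    (j1 j2 : Fin (k+2)) (hj1 : 1 ≤ (j1:ℕ)) (hp1 : p 0 < p j1)
    (hj2 : 2 ≤ (j2:ℕ)) (hp2 : p 0 < p j2 ∨ p 1 < p j2)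
    (h : Avoids π p) : Avoids (Qmap π) p := by
  rintro ⟨f, hf, hiff⟩
  have key : ∀ l : Fin (k+2), 2 ≤ (f l : ℕ) → (Qmap π (f l) : ℕ) < n := by
    intro l hl
    have h2 : (f l : ℕ) - 2 < n := by have := (f l).isLt; omega
    have he : f l = (Fin.succ (Fin.succ (⟨(f l:ℕ)-2, h2⟩ : Fin n))) := by
      apply Fin.ext; simp; omega
    rw [he, Qmap_succ_succ]
    simpa using (π _).isLt
  have h01 : (0 : Fin (k+2)) < (1 : Fin (k+2)) := by
    rw [Fin.lt_def]; simp
  rcases Nat.lt_or_ge (f 0 : ℕ) 2 with hA | hA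
  · rcases Nat.lt_or_ge (f 0 : ℕ) 1 with hB | hB
    · -- f 0 = 0
      have hf0 : f 0 = 0 := by apply Fin.ext; rw [Fin.val_zero]; omega
      have hf1 : 1 ≤ (f 1 : ℕ) := by
        have := hf h01
        rw [hf0, Fin.lt_def, Fin.val_zero] at this
        omega
      rcases Nat.lt_or_ge (f 1 : ℕ) 2 with hC | hC
      · -- f 1 = 1
        have hf1' : f 1 = 1 := by apply Fin.ext; simp; omega
        have hlt : (1 : Fin (k+2)) < j2 := by rw [Fin.lt_def]; simp; omega
        have hfj2 : 2 ≤ (f j2 : ℕ) := by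
          have := hf hlt
          rw [hf1', Fin.lt_def] at this
          simp at this; omega
        have hk := key j2 hfj2
        rcases hp2 with hp2 | hp2
        · have := (hiff 0 j2).mp hp2
          rw [hf0, Qmap_zero, Fin.lt_def] at this
          simp at this; omega
        · have := (hiff 1 j2).mp hp2
          rw [hf1', Qmap_one, Fin.lt_def] at this
          simp at this; omega
      · -- f 1 ≥ 2, use j1
        have hle : (1 : Fin (k+2)) ≤ j1 := by rw [Fin.le_def]; simp; omega
        have hfj1 : 2 ≤ (f j1 : ℕ) := by
          have := hf.monotone hle
          rw [Fin.le_def] at this; omega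
        have hk := key j1 hfj1
        have := (hiff 0 j1).mp hp1
        rw [hf0, Qmap_zero, Fin.lt_def] at this
        simp at this; omega
    · -- f 0 = 1
      have hf0 : f 0 = 1 := by apply Fin.ext; simp; omega
      have hlt : (0 : Fin (k+2)) < j1 := by rw [Fin.lt_def, Fin.val_zero]; omega
      have hfj1 : 2 ≤ (f j1 : ℕ) := by
        have := hf hlt
        rw [hf0, Fin.lt_def] at this
        simp at this; omega
      have hk := key j1 hfj1
      have := (hiff 0 j1).mp hp1
      rw [hf0, Qmap_one, Fin.lt_def] at this
      simp at this; omega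
  · -- all indices ≥ 2: restrict to π
    apply h
    have hv : ∀ i, 2 ≤ (f i : ℕ) := by
      intro i
      have := hf.monotone (Fin.zero_le i)
      rw [Fin.le_def] at this; omega
    have hv2 : ∀ i, (f i : ℕ) - 2 < n := by intro i; have := (f i).isLt; have := hv i; omega
    have ee : ∀ i, f i = Fin.succ (Fin.succ (⟨(f i : ℕ) - 2, hv2 i⟩ : Fin n)) := by
      intro i; apply Fin.ext; simp; have := hv i; omega
    refine ⟨fun i => ⟨(f i : ℕ) - 2, hv2 i⟩, fun a b hab => by
      have h2 := hf hab
      simp only [Fin.lt_def] at h2 ⊢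
      have := hv a; simp; omega, ?_⟩
    intro a b
    rw [hiff a b, ee a, ee b, Qmap_succ_succ, Qmap_succ_succ,
      Fin.castSucc_lt_castSucc_iff, Fin.castSucc_lt_castSucc_iff]
@[simp] lemma Qmap_succ_zero {n} (π : Fin n → Fin n) :
    Qmap π (Fin.succ 0) = Fin.last (n+1) := by
  rw [Qmap, Fin.cases_succ, Fin.cases_zero]

lemma Emap_bij {n} {π : Fin n → Fin n} (hb : Function.Bijective π) :
    Function.Bijective (Emap π) := by
  rw [← Finite.injective_iff_bijective]
  intro a b hab
  rcases Fin.eq_castSucc_or_eq_last a with ⟨i, rfl⟩ | rfl <;>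
    rcases Fin.eq_castSucc_or_eq_last b with ⟨j, rfl⟩ | rfl
  · rw [Emap_castSucc, Emap_castSucc] at hab
    exact congrArg Fin.castSucc (hb.1 (Fin.castSucc_injective _ hab))
  · exfalso
    rw [Emap_castSucc, Emap_last] at hab
    have h' := congrArg Fin.val hab
    have := (π i).isLt
    simp at h'; omega
  · exfalso
    rw [Emap_castSucc, Emap_last] at hab
    have h' := congrArg Fin.val hab
    have := (π j).isLt
    simp at h'; omega
  · rfl

lemma Pmap_bij {n} {π : Fin n → Fin n} (hb : Function.Bijective π) :
    Function.Bijective (Pmap π) := by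
  rw [← Finite.injective_iff_bijective]
  intro a b hab
  rcases Fin.eq_zero_or_eq_succ a with rfl | ⟨i, rfl⟩ <;>
    rcases Fin.eq_zero_or_eq_succ b with rfl | ⟨j, rfl⟩
  · rfl
  · exfalso
    rw [Pmap_zero, Pmap_succ] at hab
    have h' := congrArg Fin.val hab
    have := (π j).isLt
    simp at h'; omega
  · exfalso
    rw [Pmap_zero, Pmap_succ] at hab
    have h' := congrArg Fin.val hab
    have := (π i).isLt
    simp at h'; omega
  · rw [Pmap_succ, Pmap_succ] at hab
    exact congrArg Fin.succ (hb.1 (Fin.castSucc_injective _ hab))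

lemma Qmap_bij {n} {π : Fin n → Fin n} (hb : Function.Bijective π) :
    Function.Bijective (Qmap π) := by
  rw [← Finite.injective_iff_bijective]
  intro a b hab
  have hval : ∀ x : Fin n, ((π x).castSucc.castSucc : ℕ) < n := by
    intro x; simpa using (π x).isLt
  rcases Fin.eq_zero_or_eq_succ a with rfl | ⟨i, rfl⟩
  · rcases Fin.eq_zero_or_eq_succ b with rfl | ⟨j, rfl⟩
    · rfl
    · rcases Fin.eq_zero_or_eq_succ j with rfl | ⟨j', rfl⟩
      · exfalso
        rw [Qmap_zero, Qmap_succ_zero] at hab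
        have h' := congrArg Fin.val hab; simp at h'
      · exfalso
        rw [Qmap_zero, Qmap_succ_succ] at hab
        have h' := congrArg Fin.val hab
        have := (π j').isLt
        simp at h'; omega
  · rcases Fin.eq_zero_or_eq_succ b with rfl | ⟨j, rfl⟩
    · rcases Fin.eq_zero_or_eq_succ i with rfl | ⟨i', rfl⟩
      · exfalso
        rw [Qmap_zero, Qmap_succ_zero] at hab
        have h' := congrArg Fin.val hab; simp at h'
      · exfalso
        rw [Qmap_zero, Qmap_succ_succ] at hab
        have h' := congrArg Fin.val hab
        have := (π i').isLt
        simp at h'; omega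
    · rcases Fin.eq_zero_or_eq_succ i with rfl | ⟨i', rfl⟩ <;>
        rcases Fin.eq_zero_or_eq_succ j with rfl | ⟨j', rfl⟩
      · rfl
      · exfalso
        rw [Qmap_succ_zero, Qmap_succ_succ] at hab
        have h' := congrArg Fin.val hab
        have := (π j').isLt
        simp at h'; omega
      · exfalso
        rw [Qmap_succ_zero, Qmap_succ_succ] at hab
        have h' := congrArg Fin.val hab
        have := (π i').isLt
        simp at h'; omega
      · rw [Qmap_succ_succ, Qmap_succ_succ] at hab
        exact congrArg (fun x : Fin n => x.succ.succ) (hb.1 (Fin.castSucc_injective _ (Fin.castSucc_injective _ hab)))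

lemma Emap_mem {n} {π : Fin n → Fin n} (h : π ∈ TSS132 n) : Emap π ∈ TSS132 (n+1) :=
  ⟨Emap_bij h.1, avoids_Emap 1 (by decide) h.2.1,
    avoids_Emap 2 (by decide) h.2.2.1, avoids_Emap 2 (by decide) h.2.2.2⟩

lemma Pmap_mem {n} {π : Fin n → Fin n} (h : π ∈ TSS132 n) : Pmap π ∈ TSS132 (n+1) :=
  ⟨Pmap_bij h.1, avoids_Pmap 1 (by decide) h.2.1,
    avoids_Pmap 2 (by decide) h.2.2.1, avoids_Pmap 2 (by decide) h.2.2.2⟩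

lemma Qmap_mem {n} {π : Fin n → Fin n} (h : π ∈ TSS132 n) : Qmap π ∈ TSS132 (n+2) :=
  ⟨Qmap_bij h.1, avoids_Qmap 1 2 (by decide) (by decide) (by decide) (Or.inl (by decide)) h.2.1,
    avoids_Qmap 2 2 (by decide) (by decide) (by decide) (Or.inl (by decide)) h.2.2.1,
    avoids_Qmap 2 2 (by decide) (by decide) (by decide) (Or.inr (by decide)) h.2.2.2⟩
lemma strictMono3 {N : ℕ} {a b c : Fin N} (h1 : a < b) (h2 : b < c) :
    StrictMono ![a, b, c] := by
  intro i j hij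
  fin_cases i <;> fin_cases j <;> simp only [Fin.mk_lt_mk] at hij <;>
    simp only [Matrix.cons_val_zero, Matrix.cons_val_one, Matrix.head_cons, Fin.mk_zero,
      Fin.mk_one, Matrix.cons_val_two, Matrix.tail_cons] <;>
    first
      | omega
      | exact h1
      | exact h2
      | exact h1.trans h2

lemma strictMono4 {N : ℕ} {a b c d : Fin N} (h1 : a < b) (h2 : b < c) (h3 : c < d) :
    StrictMono ![a, b, c, d] := by
  intro i j hij
  fin_cases i <;> fin_cases j <;> simp only [Fin.mk_lt_mk] at hij <;>
    simp only [Matrix.cons_val_zero, Matrix.cons_val_one, Matrix.head_cons, Fin.mk_zero,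
      Fin.mk_one, Matrix.cons_val_two, Matrix.cons_val_three, Matrix.tail_cons] <;>
    first
      | omega
      | exact h1
      | exact h2
      | exact h3
      | exact h1.trans h2
      | exact h2.trans h3
      | exact (h1.trans h2).trans h3

lemma contains132 {N : ℕ} {σ : Fin N → Fin N} {i j l : Fin N} (hij : i < j) (hjl : j < l)
    (h1 : σ i < σ l) (h2 : σ l < σ j) : Contains σ ![1, 3, 2] := by
  refine ⟨![i, j, l], strictMono3 hij hjl, ?_⟩
  have h3 : σ i < σ j := h1.trans h2
  rw [Fin.lt_def] at h1 h2 h3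
  intro a b
  have e2 : ∀ (h : 2 < 3), (⟨2, h⟩ : Fin 3) = 2 := fun _ => rfl
  fin_cases a <;> fin_cases b <;>
    simp only [e2, Matrix.cons_val_zero, Matrix.cons_val_one, Matrix.head_cons, Fin.mk_zero,
      Fin.mk_one, Matrix.cons_val_two, Matrix.tail_cons, Fin.lt_def] <;> omega

lemma contains2341 {N : ℕ} {σ : Fin N → Fin N} {i j l m : Fin N}
    (hij : i < j) (hjl : j < l) (hlm : l < m)
    (h1 : σ m < σ i) (h2 : σ i < σ j) (h3 : σ j < σ l) : Contains σ ![2, 3, 4, 1] := by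
  refine ⟨![i, j, l, m], strictMono4 hij hjl hlm, ?_⟩
  rw [Fin.lt_def] at h1 h2 h3
  intro a b
  have e2 : ∀ (h : 2 < 4), (⟨2, h⟩ : Fin 4) = 2 := fun _ => rfl
  have e3 : ∀ (h : 3 < 4), (⟨3, h⟩ : Fin 4) = 3 := fun _ => rfl
  fin_cases a <;> fin_cases b <;>
    simp only [e2, e3, Matrix.cons_val_zero, Matrix.cons_val_one, Matrix.head_cons, Fin.mk_zero,
      Fin.mk_one, Matrix.cons_val_two, Matrix.cons_val_three, Matrix.tail_cons, Fin.lt_def] <;>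
    omega

lemma contains3241 {N : ℕ} {σ : Fin N → Fin N} {i j l m : Fin N}
    (hij : i < j) (hjl : j < l) (hlm : l < m)
    (h1 : σ m < σ j) (h2 : σ j < σ i) (h3 : σ i < σ l) : Contains σ ![3, 2, 4, 1] := by
  refine ⟨![i, j, l, m], strictMono4 hij hjl hlm, ?_⟩
  rw [Fin.lt_def] at h1 h2 h3
  intro a b
  have e2 : ∀ (h : 2 < 4), (⟨2, h⟩ : Fin 4) = 2 := fun _ => rfl
  have e3 : ∀ (h : 3 < 4), (⟨3, h⟩ : Fin 4) = 3 := fun _ => rfl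
  fin_cases a <;> fin_cases b <;>
    simp only [e2, e3, Matrix.cons_val_zero, Matrix.cons_val_one, Matrix.head_cons, Fin.mk_zero,
      Fin.mk_one, Matrix.cons_val_two, Matrix.cons_val_three, Matrix.tail_cons, Fin.lt_def] <;>
    omega
lemma structure_thm {n : ℕ} {σ : Fin (n+2) → Fin (n+2)} (h : σ ∈ TSS132 (n+2)) :
    (∃ π ∈ TSS132 (n+1), σ = Emap π) ∨ (∃ π ∈ TSS132 (n+1), σ = Pmap π) ∨
    (∃ π ∈ TSS132 n, σ = Qmap π) := by
  obtain ⟨hb, h132, h2341, h3241⟩ := h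
  obtain ⟨m, hm⟩ := hb.2 (Fin.last (n+1))
  have hlt_max : ∀ x : Fin (n+2), x ≠ m → σ x < σ m := by
    intro x hx
    rw [hm]
    refine lt_of_le_of_ne (Fin.le_last _) ?_
    rw [← hm]
    exact fun he => hx (hb.1 he)
  have lemA : ∀ i l : Fin (n+2), i < m → m < l → σ l < σ i := by
    intro i l him hml
    by_contra hcon
    push_neg at hcon
    have hniml : i ≠ l := (him.trans hml).ne
    have hil : σ i < σ l := lt_of_le_of_ne hcon (fun he => hniml (hb.1 he))
    have hlm' : σ l < σ m := hlt_max l hml.ne'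
    exact h132 (contains132 him hml hil hlm')
  have hmle : (m : ℕ) ≤ 1 ∨ (m : ℕ) = n + 1 := by
    by_contra hc
    push_neg at hc
    obtain ⟨hc1, hc2⟩ := hc
    have hmlt : (m : ℕ) < n + 1 := by have := m.isLt; omega
    set i0 : Fin (n+2) := ⟨0, by omega⟩ with hi0
    set i1 : Fin (n+2) := ⟨1, by omega⟩ with hi1
    set l0 : Fin (n+2) := ⟨(m : ℕ) + 1, by omega⟩ with hl0
    have h0m : i0 < m := by show (0:ℕ) < (m:ℕ); omega
    have h1m : i1 < m := by rw [Fin.lt_def]; simp [hi1]; omega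
    have hml : m < l0 := by rw [Fin.lt_def]; simp [hl0]
    have h01 : i0 < i1 := by rw [Fin.lt_def]; simp [hi0, hi1]
    have ha : σ l0 < σ i0 := lemA _ _ h0m hml
    have ha' : σ l0 < σ i1 := lemA _ _ h1m hml
    have hσ0m : σ i0 < σ m := hlt_max i0 h0m.ne
    have hσ1m : σ i1 < σ m := hlt_max i1 h1m.ne
    have hne : σ i0 ≠ σ i1 := fun he => h01.ne (hb.1 he)
    rcases lt_or_gt_of_ne hne with hlt | hgt
    · exact h2341 (contains2341 h01 h1m hml ha hlt hσ1m)
    · exact h3241 (contains3241 h01 h1m hml ha' hgt hσ0m)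
  have hbij : Function.Bijective σ := hb
  rcases hmle with hle1 | heq
  · rcases Nat.lt_or_ge (m : ℕ) 1 with hm0 | hm1
    · -- m = 0 : σ = Pmap π
      have hm0' : m = 0 := by apply Fin.ext; rw [Fin.val_zero]; omega
      rw [hm0'] at hm
      have hpf : ∀ i : Fin (n+1), (σ i.succ : ℕ) < n + 1 := by
        intro i
        have h1 : σ i.succ ≠ σ 0 := fun he => (Fin.succ_ne_zero i) (hbij.1 he)
        rw [hm] at h1
        have h2 := (σ i.succ).isLt
        have h3 : (σ i.succ : ℕ) ≠ n + 1 := fun he => h1 (Fin.ext (by simp [he]))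
        omega
      set π : Fin (n+1) → Fin (n+1) := fun i => ⟨(σ i.succ : ℕ), hpf i⟩ with hπ
      have hcc : ∀ {k : ℕ} (p : Fin k → ℕ), Contains π p → Contains σ p := by
        intro k p
        exact contains_comp Fin.succ (fun a b hab => Fin.succ_lt_succ_iff.mpr hab)
          (fun i j => Iff.rfl)
      have hinj : Function.Injective π := by
        intro a b hab
        have hv := congrArg Fin.val hab
        exact Fin.succ_injective _ (hbij.1 (Fin.ext hv))
      right; left
      refine ⟨π, ⟨Finite.injective_iff_bijective.mp hinj,
        fun hc => h132 (hcc _ hc), fun hc => h2341 (hcc _ hc), fun hc => h3241 (hcc _ hc)⟩, ?_⟩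
      funext x
      rcases Fin.eq_zero_or_eq_succ x with rfl | ⟨i, rfl⟩
      · rw [Pmap_zero, hm]
      · rw [Pmap_succ]
        exact Fin.ext rfl
    · -- m = 1 : σ = Qmap π
      have hm1' : m = ⟨1, by omega⟩ := by apply Fin.ext; simp; omega
      rw [hm1'] at hm
      have h1eq : (⟨1, by omega⟩ : Fin (n+2)) = (1 : Fin (n+2)) := by apply Fin.ext; simp
      -- σ 0 has value n
      have hσ0 : (σ 0 : ℕ) = n := by
        by_contra hc
        have hn0 : σ 0 ≠ σ ⟨1, by omega⟩ := fun he => by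
          have := hbij.1 he
          have := congrArg Fin.val this
          simp at this
        rw [hm] at hn0
        have hlt : (σ 0 : ℕ) < n := by
          have := (σ 0).isLt
          have : (σ 0 : ℕ) ≠ n + 1 := fun he => hn0 (Fin.ext (by simp [he]))
          omega
        obtain ⟨q, hq⟩ := hbij.2 ⟨n, by omega⟩
        have hq0 : q ≠ 0 := fun he => by rw [he] at hq; rw [hq] at hc; simp at hc
        have hq1 : q ≠ ⟨1, by omega⟩ := fun he => by
          rw [he, hm] at hq
          have := congrArg Fin.val hq
          simp at this
        have hq2 : 2 ≤ (q : ℕ) := by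
          have n0 : (q : ℕ) ≠ 0 := fun he => hq0 (Fin.ext (by simp [he]))
          have n1 : (q : ℕ) ≠ 1 := fun he => hq1 (Fin.ext (by simp [he]))
          omega
        have c1 : (0 : Fin (n+2)) < ⟨1, by omega⟩ := by rw [Fin.lt_def]; simp
        have c2 : (⟨1, by omega⟩ : Fin (n+2)) < q := by rw [Fin.lt_def]; simp; omega
        have c3 : σ 0 < σ q := by rw [Fin.lt_def, hq]; simp; omega
        have c4 : σ q < σ ⟨1, by omega⟩ := by rw [Fin.lt_def, hq, hm]; simp
        exact h132 (contains132 c1 c2 c3 c4)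
      have hpf : ∀ i : Fin n, (σ i.succ.succ : ℕ) < n := by
        intro i
        have hne0 : σ i.succ.succ ≠ σ 0 := fun he => by
          have := hbij.1 he
          exact (Fin.succ_ne_zero _) this
        have hne1 : σ i.succ.succ ≠ σ ⟨1, by omega⟩ := fun he => by
          have := congrArg Fin.val (hbij.1 he)
          simp at this
        rw [hm] at hne1
        have e1 : (σ i.succ.succ : ℕ) ≠ n := fun he => hne0 (Fin.ext (by simp [he, hσ0]))
        have e2 : (σ i.succ.succ : ℕ) ≠ n + 1 := fun he => hne1 (Fin.ext (by simp [he]))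
        have := (σ i.succ.succ).isLt
        omega
      set π : Fin n → Fin n := fun i => ⟨(σ i.succ.succ : ℕ), hpf i⟩ with hπ
      have hcc : ∀ {k : ℕ} (p : Fin k → ℕ), Contains π p → Contains σ p := by
        intro k p
        exact contains_comp (fun i => i.succ.succ)
          (fun a b hab => Fin.succ_lt_succ_iff.mpr (Fin.succ_lt_succ_iff.mpr hab))
          (fun i j => Iff.rfl)
      have hinj : Function.Injective π := by
        intro a b hab
        have hv := congrArg Fin.val hab
        exact Fin.succ_injective _ (Fin.succ_injective _ (hbij.1 (Fin.ext hv)))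
      right; right
      refine ⟨π, ⟨Finite.injective_iff_bijective.mp hinj,
        fun hc => h132 (hcc _ hc), fun hc => h2341 (hcc _ hc), fun hc => h3241 (hcc _ hc)⟩, ?_⟩
      funext x
      rcases Fin.eq_zero_or_eq_succ x with rfl | ⟨j, rfl⟩
      · rw [Qmap_zero]
        apply Fin.ext
        simp [hσ0]
      · rcases Fin.eq_zero_or_eq_succ j with rfl | ⟨i, rfl⟩
        · rw [Qmap_succ_zero, ← hm]
          congr 1
          all_goals (apply Fin.ext; simp)
        · rw [Qmap_succ_succ]
          exact Fin.ext rfl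
  · -- m = last : σ = Emap π
    have hm' : m = Fin.last (n+1) := by apply Fin.ext; simpa using heq
    rw [hm'] at hm
    have hpf : ∀ i : Fin (n+1), (σ i.castSucc : ℕ) < n + 1 := by
      intro i
      have h1 : σ i.castSucc ≠ σ (Fin.last (n+1)) := fun he => by
        have := hbij.1 he
        exact absurd (congrArg Fin.val this) (by simp; have := i.isLt; omega)
      rw [hm] at h1
      have h2 := (σ i.castSucc).isLt
      have h3 : (σ i.castSucc : ℕ) ≠ n + 1 := fun he => h1 (Fin.ext (by simp [he]))
      omega
    set π : Fin (n+1) → Fin (n+1) := fun i => ⟨(σ i.castSucc : ℕ), hpf i⟩ with hπ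
    have hcc : ∀ {k : ℕ} (p : Fin k → ℕ), Contains π p → Contains σ p := by
      intro k p
      exact contains_comp Fin.castSucc (fun a b hab => Fin.castSucc_lt_castSucc_iff.mpr hab)
        (fun i j => Iff.rfl)
    have hinj : Function.Injective π := by
      intro a b hab
      have hv := congrArg Fin.val hab
      exact Fin.castSucc_injective _ (hbij.1 (Fin.ext hv))
    left
    refine ⟨π, ⟨Finite.injective_iff_bijective.mp hinj,
      fun hc => h132 (hcc _ hc), fun hc => h2341 (hcc _ hc), fun hc => h3241 (hcc _ hc)⟩, ?_⟩
    funext x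
    rcases Fin.eq_castSucc_or_eq_last x with ⟨i, rfl⟩ | rfl
    · rw [Emap_castSucc]
      exact Fin.ext rfl
    · rw [Emap_last, hm]
lemma Emap_injective {n : ℕ} : Function.Injective (Emap (n := n)) := by
  intro a b h
  funext i
  have h' := congrFun h i.castSucc
  rw [Emap_castSucc, Emap_castSucc] at h'
  exact Fin.castSucc_injective _ h'

lemma Pmap_injective {n : ℕ} : Function.Injective (Pmap (n := n)) := by
  intro a b h
  funext i
  have h' := congrFun h i.succ
  rw [Pmap_succ, Pmap_succ] at h'
  exact Fin.castSucc_injective _ h'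

lemma Qmap_injective {n : ℕ} : Function.Injective (Qmap (n := n)) := by
  intro a b h
  funext i
  have h' := congrFun h i.succ.succ
  rw [Qmap_succ_succ, Qmap_succ_succ] at h'
  exact Fin.castSucc_injective _ (Fin.castSucc_injective _ h')

lemma TSS_eq (n : ℕ) :
    TSS132 (n+3) = Emap '' TSS132 (n+2) ∪ Pmap '' TSS132 (n+2) ∪ Qmap '' TSS132 (n+1) := by
  ext σ
  constructor
  · intro h
    rcases structure_thm (n := n+1) h with ⟨π, hπ, rfl⟩ | ⟨π, hπ, rfl⟩ | ⟨π, hπ, rfl⟩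
    · exact Or.inl (Or.inl ⟨π, hπ, rfl⟩)
    · exact Or.inl (Or.inr ⟨π, hπ, rfl⟩)
    · exact Or.inr ⟨π, hπ, rfl⟩
  · rintro ((⟨π, hπ, rfl⟩ | ⟨π, hπ, rfl⟩) | ⟨π, hπ, rfl⟩)
    exacts [Emap_mem hπ, Pmap_mem hπ, Qmap_mem hπ]

lemma disjEP (n : ℕ) :
    Disjoint (Emap '' TSS132 (n+2)) (Pmap '' TSS132 (n+2)) := by
  rw [Set.disjoint_left]
  rintro σ ⟨π, -, rfl⟩ ⟨π', -, heq⟩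
  have h' := congrFun heq (0 : Fin (n+3))
  have h0 : (0 : Fin (n+3)) = Fin.castSucc (0 : Fin (n+2)) := by apply Fin.ext; simp
  rw [Pmap_zero] at h'
  rw [h0, Emap_castSucc] at h'
  have hv := congrArg Fin.val h'
  have := (π' 0).isLt
  simp at hv
  omega

lemma disjEQ (n : ℕ) :
    Disjoint (Emap '' TSS132 (n+2)) (Qmap '' TSS132 (n+1)) := by
  rw [Set.disjoint_left]
  rintro σ ⟨π, -, rfl⟩ ⟨π', -, heq⟩
  have h' := congrFun heq (1 : Fin (n+3))
  have h0 : (1 : Fin (n+3)) = Fin.castSucc (1 : Fin (n+2)) := by apply Fin.ext; simp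
  rw [Qmap_one] at h'
  rw [h0, Emap_castSucc] at h'
  have hv := congrArg Fin.val h'
  have := (π' 1).isLt
  simp at hv
  omega

lemma disjPQ (n : ℕ) :
    Disjoint (Pmap '' TSS132 (n+2)) (Qmap '' TSS132 (n+1)) := by
  rw [Set.disjoint_left]
  rintro σ ⟨π, -, rfl⟩ ⟨π', -, heq⟩
  have h' := congrFun heq (0 : Fin (n+3))
  rw [Qmap_zero, Pmap_zero] at h'
  have hv := congrArg Fin.val h'
  simp at hv

lemma card_step (n : ℕ) :
    (TSS132 (n+3)).ncard =
      (TSS132 (n+2)).ncard + (TSS132 (n+2)).ncard + (TSS132 (n+1)).ncard := by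
  rw [TSS_eq n]
  rw [Set.ncard_union_eq (Set.disjoint_union_left.mpr ⟨disjEQ n, disjPQ n⟩)
    ((Set.toFinite _).union (Set.toFinite _)) (Set.toFinite _)]
  rw [Set.ncard_union_eq (disjEP n) (Set.toFinite _) (Set.toFinite _)]
  rw [Set.ncard_image_of_injective _ Emap_injective,
    Set.ncard_image_of_injective _ Pmap_injective,
    Set.ncard_image_of_injective _ Qmap_injective]

lemma main_aux : ∀ n : ℕ, (TSS132 (n+1)).ncard = pell (n+1)
  | 0 => by
    rw [← Nat.card_coe_set_eq, Nat.card_eq_fintype_card]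
    decide
  | 1 => by
    rw [← Nat.card_coe_set_eq, Nat.card_eq_fintype_card]
    decide
  | (k+2) => by
    have h1 := main_aux (k+1)
    have h2 := main_aux k
    have hstep := card_step k
    have e1 : (TSS132 (k+1+1)).ncard = (TSS132 (k+2)).ncard := rfl
    have e2 : pell (k+1+1) = pell (k+2) := rfl
    have e3 : pell (k+2+1) = 2 * pell (k+2) + pell (k+1) := rfl
    have e4 : (TSS132 (k+2+1)).ncard = (TSS132 (k+3)).ncard := rfl
    omega

theorem stmt_4 (n : ℕ) (hn : 1 ≤ n) : Nat.card ↥(TSS132 n) = pell n := by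
  obtain ⟨m, rfl⟩ : ∃ m, n = m + 1 := ⟨n - 1, by omega⟩
  rw [Nat.card_coe_set_eq]
  exact main_aux m
end

section
/- For all n ≥ 2, the number of permutations of {1,...,n} avoiding the patterns 132, 2341, 3241, and 312 equals 2n - 2. -/
section Aux

lemma sm3 {n : ℕ} {a b c : Fin n} (hab : a < b) (hbc : b < c) : StrictMono ![a,b,c] := by
  intro i j hij
  fin_cases i <;> fin_cases j <;> simp_all <;>
    first | exact hab | exact hbc | exact hab.trans hbc

lemma mk132 {n : ℕ} (π : Fin n → Fin n) {a b c : Fin n} (hab : a < b) (hbc : b < c)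
    (v1 : π a < π c) (v2 : π c < π b) : Contains π ![1,3,2] := by
  refine ⟨![a,b,c], sm3 hab hbc, ?_⟩
  intro i j
  fin_cases i <;> fin_cases j <;> simp <;>
    first | exact v1 | exact v2 | exact v1.trans v2
          | exact v1.le | exact v2.le | exact (v1.trans v2).le

lemma mk312 {n : ℕ} (π : Fin n → Fin n) {a b c : Fin n} (hab : a < b) (hbc : b < c)
    (v1 : π b < π c) (v2 : π c < π a) : Contains π ![3,1,2] := by
  refine ⟨![a,b,c], sm3 hab hbc, ?_⟩
  intro i j
  fin_cases i <;> fin_cases j <;> simp <;>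
    first | exact v1 | exact v2 | exact v1.trans v2
          | exact v1.le | exact v2.le | exact (v1.trans v2).le

lemma sm4 {n : ℕ} {a b c d : Fin n} (hab : a < b) (hbc : b < c) (hcd : c < d) :
    StrictMono ![a,b,c,d] := by
  intro i j hij
  fin_cases i <;> fin_cases j <;> simp_all <;>
    first | exact hab | exact hbc | exact hcd | exact hab.trans hbc
          | exact hbc.trans hcd | exact (hab.trans hbc).trans hcd

lemma mk2341 {n : ℕ} (π : Fin n → Fin n) {a b c d : Fin n} (hab : a < b) (hbc : b < c)
    (hcd : c < d) (v1 : π d < π a) (v2 : π a < π b) (v3 : π b < π c) :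
    Contains π ![2,3,4,1] := by
  refine ⟨![a,b,c,d], sm4 hab hbc hcd, ?_⟩
  intro i j
  fin_cases i <;> fin_cases j <;> simp <;>
    first | exact v1 | exact v2 | exact v3 | exact v1.trans v2 | exact v2.trans v3
          | exact (v1.trans v2).trans v3
          | exact v1.le | exact v2.le | exact v3.le | exact (v1.trans v2).le
          | exact (v2.trans v3).le | exact ((v1.trans v2).trans v3).le

lemma mk3241 {n : ℕ} (π : Fin n → Fin n) {a b c d : Fin n} (hab : a < b) (hbc : b < c)
    (hcd : c < d) (v1 : π d < π b) (v2 : π b < π a) (v3 : π a < π c) :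
    Contains π ![3,2,4,1] := by
  refine ⟨![a,b,c,d], sm4 hab hbc hcd, ?_⟩
  intro i j
  fin_cases i <;> fin_cases j <;> simp <;>
    first | exact v1 | exact v2 | exact v3 | exact v1.trans v2 | exact v2.trans v3
          | exact (v1.trans v2).trans v3
          | exact v1.le | exact v2.le | exact v3.le | exact (v1.trans v2).le
          | exact (v2.trans v3).le | exact ((v1.trans v2).trans v3).le

/-- value of the candidate permutation: swap `0,1` if `s`, then `i ↦ k - i` on `[0,k]`,
identity above `k`. -/
def perVal (k : ℕ) (s : Bool) (i : ℕ) : ℕ :=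
  let j := if s = true ∧ i = 0 then 1 else if s = true ∧ i = 1 then 0 else i
  if j ≤ k then k - j else i

lemma perVal_lt {n : ℕ} (k : ℕ) (s : Bool) (i : ℕ) (hk : k < n) (hi : i < n) :
    perVal k s i < n := by
  unfold perVal; dsimp only; split_ifs <;> omega

def per (n k : ℕ) (s : Bool) : Fin n → Fin n := fun i =>
  if h : perVal k s i.val < n then ⟨perVal k s i.val, h⟩ else i

lemma per_val {n k : ℕ} (s : Bool) (hk : k < n) (i : Fin n) :
    (per n k s i : ℕ) = perVal k s i.val := by
  unfold per; rw [dif_pos (perVal_lt k s i.val hk i.isLt)]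

lemma perVal_lt_iff (k : ℕ) (s : Bool) (hk1 : 1 ≤ k) {a b : ℕ} (hab : a < b) :
    perVal k s a < perVal k s b ↔ k < b ∨ (b = 1 ∧ s = true) := by
  unfold perVal; dsimp only
  cases s <;>
    simp only [Bool.false_eq_true, false_and, true_and, if_false, if_true, and_true,
      and_false] <;>
    split_ifs <;>
    first
      | omega
      | (constructor <;> intro h0 <;> (try rcases h0 with h0 | h0) <;>
          first | exact h0.elim | omega)

lemma perVal_inj (k : ℕ) (s : Bool) (hk1 : 1 ≤ k) {a b : ℕ}
    (h : perVal k s a = perVal k s b) : a = b := by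
  unfold perVal at h; dsimp only at h
  cases s <;>
    simp only [Bool.false_eq_true, false_and, true_and, if_false, if_true, and_true,
      and_false] at h <;>
    split_ifs at h <;> omega

lemma per_lt_iff {n k : ℕ} (s : Bool) (hk1 : 1 ≤ k) (hk : k < n) {a b : Fin n} (hab : a < b) :
    per n k s a < per n k s b ↔ k < b.val ∨ (b.val = 1 ∧ s = true) := by
  rw [Fin.lt_def, per_val s hk, per_val s hk]
  exact perVal_lt_iff k s hk1 hab

lemma per_bij {n k : ℕ} (s : Bool) (hk1 : 1 ≤ k) (hk : k < n) :
    Function.Bijective (per n k s) := by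
  have hinj : Function.Injective (per n k s) := by
    intro a b h
    have := congrArg Fin.val h
    rw [per_val s hk, per_val s hk] at this
    exact Fin.ext (perVal_inj k s hk1 this)
  exact Finite.injective_iff_bijective.mp hinj

/-- Bijections on `Fin n` with the same pairwise order comparisons are equal. -/
lemma eq_of_orderIff {n : ℕ} {π σ : Fin n → Fin n} (hπ : Function.Bijective π)
    (hσ : Function.Bijective σ) (h : ∀ a b, a < b → (π a < π b ↔ σ a < σ b)) : π = σ := by
  have h' : ∀ a b, π a < π b ↔ σ a < σ b := by
    intro a b
    rcases lt_trichotomy a b with hl | rfl | hg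
    · exact h a b hl
    · simp
    · constructor
      · intro hp
        rcases lt_trichotomy (σ a) (σ b) with h1 | h1 | h1
        · exact h1
        · exact absurd (hσ.1 h1) (ne_of_gt hg)
        · exact absurd ((h b a hg).mpr h1) (asymm hp)
      · intro hp
        rcases lt_trichotomy (π a) (π b) with h1 | h1 | h1
        · exact h1
        · exact absurd (hπ.1 h1) (ne_of_gt hg)
        · exact absurd ((h b a hg).mp h1) (asymm hp)
  let e := Equiv.ofBijective π hπ
  have hg : StrictMono (σ ∘ e.symm) := by
    intro x y hxy
    have hx : π (e.symm x) = x := e.apply_symm_apply x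
    have hy : π (e.symm y) = y := e.apply_symm_apply y
    have : π (e.symm x) < π (e.symm y) := by rw [hx, hy]; exact hxy
    exact (h' _ _).mp this
  have hid : StrictMono (id : Fin n → Fin n) := strictMono_id
  have hrange : Set.range (σ ∘ e.symm) = Set.range (id : Fin n → Fin n) := by
    rw [Set.range_id]
    exact (hσ.2.comp e.symm.surjective).range_eq
  have : σ ∘ e.symm = id := (@StrictMono.range_inj (Fin n) (Fin n) _ _ (inferInstance : WellFoundedLT (Fin n)) (σ ∘ e.symm) id hg hid).mp hrange
  funext a
  have := congrFun this (π a)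
  simpa [e] using this.symm

end Aux


section Fwd

lemma per_avoids {n k : ℕ} (s : Bool) (hk1 : 1 ≤ k) (hk : k < n) :
    Avoids (per n k s) ![1,3,2] ∧ Avoids (per n k s) ![2,3,4,1] ∧
      Avoids (per n k s) ![3,2,4,1] ∧ Avoids (per n k s) ![3,1,2] := by
  set σ := per n k s with hσ
  have char : ∀ {a b : Fin n}, a < b → (σ a < σ b ↔ k < b.val ∨ (b.val = 1 ∧ s = true)) :=
    fun hab => per_lt_iff s hk1 hk hab
  refine ⟨?_, ?_, ?_, ?_⟩
  · rintro ⟨f, hf, h⟩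
    have h01 : f 0 < f 1 := hf (by decide)
    have h12 : f 1 < f 2 := hf (by decide)
    have hc2 : 2 ≤ (f 2).val := by
      have := Fin.lt_def.mp h01; have := Fin.lt_def.mp h12; omega
    have v1 : σ (f 0) < σ (f 2) := (h 0 2).mp (by decide)
    have v2 : σ (f 2) < σ (f 1) := (h 2 1).mp (by decide)
    have c1 := (char (h01.trans h12)).mp v1
    have c2 : ¬ k < (f 2).val := fun hh => absurd ((char h12).mpr (Or.inl hh)) (asymm v2)
    rcases c1 with c1 | ⟨c1, -⟩ <;> omega
  · rintro ⟨f, hf, h⟩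
    have h01 : f 0 < f 1 := hf (by decide)
    have h12 : f 1 < f 2 := hf (by decide)
    have h23 : f 2 < f 3 := hf (by decide)
    have hc2 : 2 ≤ (f 2).val := by
      have := Fin.lt_def.mp h01; have := Fin.lt_def.mp h12; omega
    have v1 : σ (f 0) < σ (f 2) := (h 0 2).mp (by decide)
    have v2 : σ (f 3) < σ (f 2) := (h 3 2).mp (by decide)
    have c1 := (char (h01.trans h12)).mp v1
    have c2 : ¬ σ (f 2) < σ (f 3) := asymm v2
    have c3 := (char h23).not.mp c2
    rw [not_or] at c3
    have hd : (f 2).val < (f 3).val := Fin.lt_def.mp h23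
    rcases c1 with c1 | ⟨c1, -⟩
    · exact c3.1 (by omega)
    · omega
  · rintro ⟨f, hf, h⟩
    have h01 : f 0 < f 1 := hf (by decide)
    have h12 : f 1 < f 2 := hf (by decide)
    have h23 : f 2 < f 3 := hf (by decide)
    have hc2 : 2 ≤ (f 2).val := by
      have := Fin.lt_def.mp h01; have := Fin.lt_def.mp h12; omega
    have v1 : σ (f 0) < σ (f 2) := (h 0 2).mp (by decide)
    have v2 : σ (f 3) < σ (f 2) := (h 3 2).mp (by decide)
    have c1 := (char (h01.trans h12)).mp v1
    have c2 : ¬ σ (f 2) < σ (f 3) := asymm v2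
    have c3 := (char h23).not.mp c2
    rw [not_or] at c3
    have hd : (f 2).val < (f 3).val := Fin.lt_def.mp h23
    rcases c1 with c1 | ⟨c1, -⟩
    · exact c3.1 (by omega)
    · omega
  · rintro ⟨f, hf, h⟩
    have h01 : f 0 < f 1 := hf (by decide)
    have h12 : f 1 < f 2 := hf (by decide)
    have hc2 : 2 ≤ (f 2).val := by
      have := Fin.lt_def.mp h01; have := Fin.lt_def.mp h12; omega
    have v1 : σ (f 1) < σ (f 2) := (h 1 2).mp (by decide)
    have v2 : σ (f 2) < σ (f 0) := (h 2 0).mp (by decide)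
    have c1 := (char h12).mp v1
    have c2 : ¬ σ (f 0) < σ (f 2) := asymm v2
    have c3 := (char (h01.trans h12)).not.mp c2
    rw [not_or] at c3
    rcases c1 with c1 | ⟨c1, -⟩
    · exact c3.1 (by omega)
    · omega

end Fwd


section Bwd

variable {n : ℕ}

lemma minmax {π : Fin n → Fin n} (hinj : Function.Injective π)
    (h132 : Avoids π ![1,3,2]) (h312 : Avoids π ![3,1,2]) (c : Fin n) :
    (∀ a, a < c → π a < π c) ∨ (∀ a, a < c → π c < π a) := by
  by_contra hcon
  push_neg at hcon
  obtain ⟨⟨a, hac, ha⟩, ⟨b, hbc, hb⟩⟩ := hcon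
  have ha' : π c < π a := lt_of_le_of_ne ha (fun e => (ne_of_gt hac) (hinj e))
  have hb' : π b < π c := lt_of_le_of_ne hb (fun e => (ne_of_lt hbc) (hinj e))
  rcases lt_trichotomy a b with hab | rfl | hba
  · exact h312 (mk312 π hab hbc hb' ha')
  · exact absurd (hb'.trans ha') (lt_irrefl _)
  · exact h132 (mk132 π hba hac hb' ha')

lemma structure_thm_s8 (hn : 2 ≤ n) {π : Fin n → Fin n} (hb : Function.Bijective π)
    (h132 : Avoids π ![1,3,2]) (h2341 : Avoids π ![2,3,4,1])
    (h3241 : Avoids π ![3,2,4,1]) (h312 : Avoids π ![3,1,2]) :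
    ∃ k s, 1 ≤ k ∧ k < n ∧ π = per n k s := by
  set z0 : Fin n := ⟨0, by omega⟩ with hz0
  set z1 : Fin n := ⟨1, by omega⟩ with hz1
  have hz01 : z0 < z1 := by simp [hz0, hz1, Fin.lt_def]
  have A := minmax hb.1 h132 h312
  -- B : a max-step at position ≥ 2 forces all later positions to be max-steps
  have B : ∀ c d : Fin n, 2 ≤ c.val → c < d → (∀ a, a < c → π a < π c) →
      (∀ a, a < d → π a < π d) := by
    intro c d hc2 hcd hmx
    rcases A d with h | hmn
    · exact h
    exfalso
    have h0c : z0 < c := by simp [hz0, Fin.lt_def]; omega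
    have h1c : z1 < c := by simp [hz1, Fin.lt_def]; omega
    have p0 : π z0 < π c := hmx z0 h0c
    have p1 : π z1 < π c := hmx z1 h1c
    have q0 : π d < π z0 := hmn z0 (h0c.trans hcd)
    have q1 : π d < π z1 := hmn z1 (h1c.trans hcd)
    have hne : π z0 ≠ π z1 := fun e => (ne_of_lt hz01) (hb.1 e)
    rcases hne.lt_or_gt with h01 | h01
    · exact h2341 (mk2341 π hz01 h1c hcd q0 h01 p1)
    · exact h3241 (mk3241 π hz01 h1c hcd q1 h01 p0)
  -- least m ≥ 2 from which on everything is a max-step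
  set Q : ℕ → Prop := fun j => 2 ≤ j ∧ ∀ i : Fin n, j ≤ i.val → ∀ a, a < i → π a < π i
    with hQ
  have hQn : Q n := ⟨hn, fun i hi => absurd i.isLt (by omega)⟩
  have hex : ∃ j, Q j := ⟨n, hQn⟩
  set m := Nat.find hex with hm
  have hmQ : Q m := Nat.find_spec hex
  have hmn' : m ≤ n := Nat.find_le hQn
  have hm2 : 2 ≤ m := hmQ.1
  have hmax : ∀ i : Fin n, m ≤ i.val → ∀ a, a < i → π a < π i := hmQ.2
  have hmin : ∀ c : Fin n, 2 ≤ c.val → c.val < m → ∀ a, a < c → π c < π a := by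
    intro c h2 hcm
    rcases A c with hmx | hmn
    · exfalso
      refine Nat.find_min hex hcm ⟨h2, fun i hi a hai => ?_⟩
      rcases eq_or_lt_of_le hi with he | hlt
      · have : i = c := Fin.ext he.symm
        exact this ▸ hmx a (this ▸ hai)
      · exact B c i h2 (Fin.lt_def.mpr hlt) hmx a hai
    · exact hmn
  refine ⟨m - 1, decide (π z0 < π z1), by omega, by omega, ?_⟩
  have hk1 : 1 ≤ m - 1 := by omega
  have hkn : m - 1 < n := by omega
  refine eq_of_orderIff hb (per_bij _ hk1 hkn) ?_
  intro a b hab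
  rw [per_lt_iff _ hk1 hkn hab]
  rcases Nat.lt_or_ge b.val 2 with hb2 | hb2
  · -- b.val = 1 (since a < b forces b.val ≥ 1)
    have hbv : b.val = 1 := by have := Fin.lt_def.mp hab; omega
    have hav : a.val = 0 := by have := Fin.lt_def.mp hab; omega
    have hae : a = z0 := Fin.ext hav
    have hbe : b = z1 := Fin.ext hbv
    subst hae; subst hbe
    constructor
    · intro hlt
      exact Or.inr ⟨hbv, decide_eq_true hlt⟩
    · rintro (hlt | ⟨-, hs⟩)
      · omega
      · exact of_decide_eq_true hs
  · rcases Nat.lt_or_ge b.val m with hbm | hbm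
    · have := hmin b hb2 hbm a hab
      constructor
      · intro hlt; exact absurd hlt (asymm this)
      · rintro (hlt | ⟨hb1, -⟩) <;> omega
    · have := hmax b hbm a hab
      constructor
      · intro _; exact Or.inl (by omega)
      · intro _; exact this

end Bwd


lemma perVal_at01 (k : ℕ) (s : Bool) (hk1 : 1 ≤ k) :
    perVal k s 0 = (if s = true then k - 1 else k) ∧
      perVal k s 1 = (if s = true then k else k - 1) := by
  unfold perVal
  cases s <;> simp <;> omega

lemma per_inj {n : ℕ} (hn : 2 ≤ n) :
    Function.Injective (fun p : Bool × Fin (n-1) => per n (p.2.val + 1) p.1) := by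
  rintro ⟨s, j⟩ ⟨s', j'⟩ h
  simp only at h
  have hk1 : 1 ≤ j.val + 1 := by omega
  have hkn : j.val + 1 < n := by have := j.isLt; omega
  have hk1' : 1 ≤ j'.val + 1 := by omega
  have hkn' : j'.val + 1 < n := by have := j'.isLt; omega
  set z0 : Fin n := ⟨0, by omega⟩
  set z1 : Fin n := ⟨1, by omega⟩
  have e0 : perVal (j.val+1) s 0 = perVal (j'.val+1) s' 0 := by
    have := congrFun h z0
    have h1 := congrArg Fin.val this
    rwa [per_val s hkn, per_val s' hkn'] at h1
  have e1 : perVal (j.val+1) s 1 = perVal (j'.val+1) s' 1 := by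
    have := congrFun h z1
    have h1 := congrArg Fin.val this
    rwa [per_val s hkn, per_val s' hkn'] at h1
  obtain ⟨a0, a1⟩ := perVal_at01 (j.val+1) s hk1
  obtain ⟨b0, b1⟩ := perVal_at01 (j'.val+1) s' hk1'
  rw [a0, b0] at e0
  rw [a1, b1] at e1
  cases s <;> cases s' <;> simp at e0 e1 <;>
    first
      | omega
      | exact Prod.ext rfl (Fin.ext (by omega))
      | exact Prod.ext rfl (Fin.ext e1)
      | exact Prod.ext rfl (Fin.ext e0)


theorem stmt_8 (n : ℕ) (hn : 2 ≤ n) :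
    Nat.card ↥{π ∈ TSS132 n | Avoids π ![3,1,2]} = 2*n - 2 := by
  have hset : {π ∈ TSS132 n | Avoids π ![3,1,2]} =
      Set.range (fun p : Bool × Fin (n-1) => per n (p.2.val + 1) p.1) := by
    ext π
    simp only [Set.mem_setOf_eq, Set.mem_range, TSS132]
    constructor
    · rintro ⟨⟨hbij, h1, h2, h3⟩, h4⟩
      obtain ⟨k, s, hk1, hkn, rfl⟩ := structure_thm_s8 hn hbij h1 h2 h3 h4
      refine ⟨(s, ⟨k-1, by omega⟩), ?_⟩
      simp only
      have hkk : k - 1 + 1 = k := by omega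
      rw [hkk]
    · rintro ⟨⟨s, j⟩, rfl⟩
      have hk1 : 1 ≤ j.val + 1 := by omega
      have hkn : j.val + 1 < n := by have := j.isLt; omega
      obtain ⟨a1, a2, a3, a4⟩ := per_avoids s hk1 hkn
      exact ⟨⟨per_bij s hk1 hkn, a1, a2, a3⟩, a4⟩
  rw [hset, Nat.card_range_of_injective (per_inj hn)]
  simp only [Nat.card_eq_fintype_card, Fintype.card_prod, Fintype.card_bool, Fintype.card_fin]
  omega
end
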